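/- Let J be a finite index set and let d : J → ℤ and m : J → ℤ be families of integers with Σ_{j∈J} d_j·m_j² = 0. Then the function g : ℂ → ℂ defined by g(z) = ∏_{j∈J} σ(m_j·z)^{d_j} (integer powers in ℂ, with the convention that 0 raised to a negative power is 0) is elliptic with respect to Λ: g(z + λ) = g(z) for every z ∈ ℂ and every λ ∈ Λ. -/

import Mathlib

/-- The nome `q = exp(2πiτ)`. -/
noncomputable def nome (τ : ℂ) : ℂ := Complex.exp (2 * Real.pi * Complex.I * τ)

/-- The Weierstrass-type sigma function
`σ(z) = (e^{z/2} - e^{-z/2}) ∏_{n ≥ 1} (1 - qⁿ eᶻ)(1 - qⁿ e^{-z})/(1 - qⁿ)²`,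
where the product over integers `n ≥ 1` is encoded as a product over `n : ℕ`
with exponent `n + 1`. -/
noncomputable def wsigma (τ : ℂ) (z : ℂ) : ℂ :=
  (Complex.exp (z / 2) - Complex.exp (-z / 2)) *
    ∏' n : ℕ, ((1 - nome τ ^ (n + 1) * Complex.exp z) *
      (1 - nome τ ^ (n + 1) * Complex.exp (-z)) / (1 - nome τ ^ (n + 1)) ^ 2)

open Complex

lemma mult_aux {f : ℕ → ℂ} (hf : Summable fun n => ‖f n - 1‖) : Multipliable f := by
  have h0 : Filter.Tendsto (fun n => ‖f n - 1‖) Filter.atTop (nhds 0) := hf.tendsto_atTop_zero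
  have hev : ∀ᶠ n in Filter.atTop, ‖f n - 1‖ < 1/2 :=
    h0.eventually (gt_mem_nhds (by norm_num : (0:ℝ) < 1/2))
  obtain ⟨k, hk⟩ := Filter.eventually_atTop.1 hev
  set g : ℕ → ℂ := fun n => f (n + k) with hg
  have hk' : ∀ n, ‖g n - 1‖ ≤ 1/2 := fun n => (hk (n + k) (Nat.le_add_left _ _)).le
  have hgne : ∀ n, g n ≠ 0 := by
    intro n h
    have h1 := hk' n
    rw [h] at h1
    simp at h1
    norm_num at h1
  have hsum : Summable fun n => Complex.log (g n) := by
    apply Summable.of_norm_bounded (g := fun n => 3/2 * ‖g n - 1‖)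
    · exact ((summable_nat_add_iff k).2 hf).mul_left _
    · intro n
      have := Complex.norm_log_one_add_half_le_self (z := g n - 1) (by simpa using hk' n)
      simpa using this
  have hmul : Multipliable g := by
    have h2 := hsum.hasSum.cexp
    have h3 : (cexp ∘ fun n => Complex.log (g n)) = g :=
      funext fun n => Complex.exp_log (hgne n)
    rw [h3] at h2
    exact ⟨_, h2⟩
  exact hmul.comp_nat_add

section Tau

variable {τ : ℂ} (hτ : 0 < τ.im)

local notation "q" => nome τ

include hτ

lemma norm_nome_lt_one : ‖q‖ < 1 := by
  rw [nome, Complex.norm_exp]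
  have hre : (2 * (Real.pi:ℂ) * Complex.I * τ).re = -(2 * Real.pi * τ.im) := by
    simp [Complex.mul_re, Complex.mul_im]
  rw [hre, Real.exp_lt_one_iff]
  have := Real.pi_pos
  nlinarith

lemma summable_q (c : ℂ) : Summable fun n : ℕ => ‖q ^ n * c‖ := by
  have : (fun n : ℕ => ‖q ^ n * c‖) = fun n : ℕ => ‖q‖ ^ n * ‖c‖ := by
    funext n; rw [norm_mul, norm_pow]
  rw [this]
  exact (summable_geometric_of_lt_one (norm_nonneg _) (norm_nome_lt_one hτ)).mul_right _

lemma multq0 (c : ℂ) : Multipliable fun n : ℕ => 1 - q ^ n * c := by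
  apply mult_aux
  have : (fun n : ℕ => ‖(1 - q ^ n * c) - 1‖) = fun n : ℕ => ‖q ^ n * c‖ := by
    funext n; rw [show (1 - q ^ n * c) - 1 = -(q ^ n * c) by ring, norm_neg]
  rw [this]
  exact summable_q hτ c

lemma multq1 (c : ℂ) : Multipliable fun n : ℕ => 1 - q ^ (n + 1) * c := by
  have := multq0 hτ (q * c)
  refine this.congr fun n => ?_
  ring

lemma one_sub_qpow_ne (n : ℕ) : (1 : ℂ) - q ^ (n + 1) ≠ 0 := by
  have h1 : ‖q ^ (n+1)‖ < 1 := by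
    rw [norm_pow]
    exact pow_lt_one₀ (norm_nonneg _) (norm_nome_lt_one hτ) (Nat.succ_ne_zero n)
  intro h
  rw [sub_eq_zero] at h
  rw [← h] at h1
  simp at h1

set_option maxHeartbeats 1000000 in
lemma multinv : Multipliable fun n : ℕ => ((1 - q ^ (n + 1))⁻¹ : ℂ) := by
  apply mult_aux
  have hq := norm_nome_lt_one hτ
  refine Summable.of_nonneg_of_le (fun n => norm_nonneg _) (fun n => ?_)
    ((summable_geometric_of_lt_one (norm_nonneg _) hq).mul_right (‖q‖ * (1 - ‖q‖)⁻¹))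
  · 
    have hne := one_sub_qpow_ne hτ n
    have heq : ((1 - q ^ (n+1))⁻¹ : ℂ) - 1 = q ^ (n+1) * (1 - q ^ (n+1))⁻¹ := by
      field_simp
      ring
    rw [heq, norm_mul]
    have h1 : ‖q ^ (n+1)‖ ≤ ‖q‖ ^ n * ‖q‖ := by
      rw [norm_pow, pow_succ]
    have h2 : ‖((1 - q ^ (n+1))⁻¹ : ℂ)‖ ≤ (1 - ‖q‖)⁻¹ := by
      rw [norm_inv]
      apply inv_anti₀ (by linarith)
      have := norm_sub_norm_le (1 : ℂ) (q ^ (n+1))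
      have h3 : ‖q ^ (n+1)‖ ≤ ‖q‖ := by
        rw [norm_pow]
        exact pow_le_of_le_one (norm_nonneg _) hq.le (Nat.succ_ne_zero n)
      simp only [norm_one] at this
      linarith
    calc ‖q ^ (n+1)‖ * ‖((1 - q ^ (n+1))⁻¹ : ℂ)‖
        ≤ (‖q‖ ^ n * ‖q‖) * (1 - ‖q‖)⁻¹ := by
          apply mul_le_mul h1 h2 (norm_nonneg _)
          positivity
      _ = ‖q‖ ^ n * (‖q‖ * (1 - ‖q‖)⁻¹) := by ring

lemma multci : Multipliable fun n : ℕ => (((1 - q ^ (n + 1))⁻¹ : ℂ)) ^ 2 := by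
  have := (multinv hτ).mul (multinv hτ)
  refine this.congr fun n => ?_
  ring


set_option maxHeartbeats 1000000 in
lemma tprod_shift (z : ℂ) :
    (1 - q * cexp z) *
      ∏' n : ℕ, ((1 - q ^ (n + 1) * (cexp z * q)) * (1 - q ^ (n + 1) * (cexp (-z) * q⁻¹)) /
        (1 - q ^ (n + 1)) ^ 2)
    = (1 - cexp (-z)) *
      ∏' n : ℕ, ((1 - q ^ (n + 1) * cexp z) * (1 - q ^ (n + 1) * cexp (-z)) /
        (1 - q ^ (n + 1)) ^ 2) := by
  have hqne : q ≠ 0 := Complex.exp_ne_zero _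
  set a : ℕ → ℂ := fun n => 1 - q ^ (n + 1) * cexp z with ha
  set b' : ℕ → ℂ := fun n => 1 - q ^ n * cexp (-z) with hb'
  set ci : ℕ → ℂ := fun n => ((1 - q ^ (n + 1))⁻¹) ^ 2 with hci
  have hA : Multipliable a := multq1 hτ _
  have hA1 : Multipliable (fun n => a (n + 1)) := by
    refine (multq1 hτ (q * cexp z)).congr fun n => ?_
    simp only [ha]; ring
  have hB' : Multipliable b' := multq0 hτ _
  have hB1 : Multipliable (fun n => b' (n + 1)) := by
    refine (multq1 hτ (cexp (-z))).congr fun n => ?_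
    simp only [hb']
  have hCi : Multipliable ci := multci hτ
  have e1 : ∀ n : ℕ, q ^ (n + 1) * q⁻¹ = q ^ n := fun n => by
    rw [pow_succ, mul_assoc, mul_inv_cancel₀ hqne, mul_one]
  have hLc : ∀ n : ℕ, (1 - q ^ (n + 1) * (cexp z * q)) * (1 - q ^ (n + 1) * (cexp (-z) * q⁻¹)) /
      (1 - q ^ (n + 1)) ^ 2 = (a (n + 1) * b' n) * ci n := by
    intro n
    have h2 : 1 - q ^ (n + 1) * (cexp (-z) * q⁻¹) = b' n := by
      rw [hb', show q ^ (n + 1) * (cexp (-z) * q⁻¹) = q ^ (n + 1) * q⁻¹ * cexp (-z) by ring,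
        e1 n]
    have h3 : 1 - q ^ (n + 1) * (cexp z * q) = a (n + 1) := by
      simp only [ha]; ring
    rw [h2, h3, div_eq_mul_inv]
    simp [hci, inv_pow]
  have hRc : ∀ n : ℕ, (1 - q ^ (n + 1) * cexp z) * (1 - q ^ (n + 1) * cexp (-z)) /
      (1 - q ^ (n + 1)) ^ 2 = (a n * b' (n + 1)) * ci n := by
    intro n
    rw [div_eq_mul_inv]
    simp [ha, hb', hci, inv_pow]
  rw [tprod_congr hLc, tprod_congr hRc,
    Multipliable.tprod_mul (hA1.mul hB') hCi, Multipliable.tprod_mul hA1 hB',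
    Multipliable.tprod_mul (hA.mul hB1) hCi, Multipliable.tprod_mul hA hB1,
    tprod_eq_zero_mul' hA1, tprod_eq_zero_mul' hB1]
  have ha0 : a 0 = 1 - q * cexp z := by simp [ha]
  have hb0 : b' 0 = 1 - cexp (-z) := by simp [hb']
  rw [ha0, hb0]
  ring

omit hτ in
lemma key1 (z : ℂ) : wsigma τ (z + 2 * Real.pi * Complex.I) = -wsigma τ z := by
  rw [wsigma, wsigma]
  have h1 : cexp ((z + 2 * Real.pi * Complex.I) / 2) = -cexp (z / 2) := by
    rw [show ((z + 2 * Real.pi * Complex.I) / 2 : ℂ) = z / 2 + Real.pi * Complex.I by ring,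
      Complex.exp_add, Complex.exp_pi_mul_I]
    ring
  have h2 : cexp (-(z + 2 * Real.pi * Complex.I) / 2) = -cexp (-z / 2) := by
    rw [show (-(z + 2 * Real.pi * Complex.I) / 2 : ℂ) = -z / 2 + -(Real.pi * Complex.I) by ring,
      Complex.exp_add]
    simp [Complex.exp_neg, Complex.exp_pi_mul_I]
  have h3 : cexp (z + 2 * Real.pi * Complex.I) = cexp z := by
    rw [Complex.exp_add, Complex.exp_two_pi_mul_I, mul_one]
  have h4 : cexp (-(z + 2 * Real.pi * Complex.I)) = cexp (-z) := by
    rw [show (-(z + 2 * Real.pi * Complex.I) : ℂ) = -z + -(2 * Real.pi * Complex.I) by ring,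
      Complex.exp_add]
    simp [Complex.exp_neg, Complex.exp_two_pi_mul_I]
  rw [h1, h2, h3, h4]
  ring

set_option maxHeartbeats 1000000 in
lemma key2 (z : ℂ) :
    wsigma τ (z + 2 * Real.pi * Complex.I * τ) =
      -cexp (-(Real.pi * Complex.I * τ) - z) * wsigma τ z := by
  have hqne : q ≠ 0 := Complex.exp_ne_zero _
  have hu : cexp (z / 2) ≠ 0 := Complex.exp_ne_zero _
  have hv : cexp (Real.pi * Complex.I * τ) ≠ 0 := Complex.exp_ne_zero _
  have hq2 : q = cexp (Real.pi * Complex.I * τ) ^ 2 := by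
    rw [nome, sq, ← Complex.exp_add]
    ring_nf
  have hz2 : cexp z = cexp (z / 2) ^ 2 := by
    rw [sq, ← Complex.exp_add]
    ring_nf
  have hexp1 : cexp (z + 2 * Real.pi * Complex.I * τ) = cexp z * q := by
    rw [nome, ← Complex.exp_add]
  have hexp2 : cexp (-(z + 2 * Real.pi * Complex.I * τ)) = cexp (-z) * q⁻¹ := by
    rw [show (-(z + 2 * Real.pi * Complex.I * τ) : ℂ) =
      -z + -(2 * Real.pi * Complex.I * τ) by ring, Complex.exp_add, nome]
    simp [Complex.exp_neg]
  rw [wsigma, wsigma]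
  have hprod : (∏' n : ℕ, ((1 - q ^ (n + 1) * cexp (z + 2 * Real.pi * Complex.I * τ)) *
      (1 - q ^ (n + 1) * cexp (-(z + 2 * Real.pi * Complex.I * τ))) / (1 - q ^ (n + 1)) ^ 2))
      = ∏' n : ℕ, ((1 - q ^ (n + 1) * (cexp z * q)) * (1 - q ^ (n + 1) * (cexp (-z) * q⁻¹)) /
        (1 - q ^ (n + 1)) ^ 2) := tprod_congr fun n => by rw [hexp1, hexp2]
  rw [hprod]
  set P := ∏' n : ℕ, ((1 - q ^ (n + 1) * cexp z) * (1 - q ^ (n + 1) * cexp (-z)) /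
    (1 - q ^ (n + 1)) ^ 2) with hP
  set L := ∏' n : ℕ, ((1 - q ^ (n + 1) * (cexp z * q)) * (1 - q ^ (n + 1) * (cexp (-z) * q⁻¹)) /
    (1 - q ^ (n + 1)) ^ 2) with hL
  have hts : (1 - q * cexp z) * L = (1 - cexp (-z)) * P := tprod_shift hτ z
  have hpre : cexp ((z + 2 * Real.pi * Complex.I * τ) / 2) -
      cexp (-(z + 2 * Real.pi * Complex.I * τ) / 2) =
      -(cexp (Real.pi * Complex.I * τ))⁻¹ * (cexp (z / 2))⁻¹ * (1 - q * cexp z) := by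
    rw [show ((z + 2 * Real.pi * Complex.I * τ) / 2 : ℂ) =
        z / 2 + Real.pi * Complex.I * τ by ring,
      show (-(z + 2 * Real.pi * Complex.I * τ) / 2 : ℂ) =
        -(z / 2) + -(Real.pi * Complex.I * τ) by ring,
      Complex.exp_add, Complex.exp_add, Complex.exp_neg, Complex.exp_neg, hq2, hz2]
    field_simp
    ring
  have hmz : cexp (-z) = ((cexp (z / 2)) ^ 2)⁻¹ := by
    rw [← hz2, ← Complex.exp_neg]
  have hrhs : cexp (-(Real.pi * Complex.I * τ) - z) =
      (cexp (Real.pi * Complex.I * τ))⁻¹ * ((cexp (z / 2)) ^ 2)⁻¹ := by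
    rw [show (-(Real.pi * Complex.I * τ) - z : ℂ) =
      -(Real.pi * Complex.I * τ) + -z by ring, Complex.exp_add]
    simp only [Complex.exp_neg, hz2]
  have hmz2 : cexp (-z / 2) = (cexp (z / 2))⁻¹ := by
    rw [show (-z / 2 : ℂ) = -(z / 2) by ring, Complex.exp_neg]
  rw [hpre, hrhs, hmz2]
  calc -(cexp (Real.pi * Complex.I * τ))⁻¹ * (cexp (z / 2))⁻¹ * (1 - q * cexp z) * L
      = -(cexp (Real.pi * Complex.I * τ))⁻¹ * (cexp (z / 2))⁻¹ * ((1 - q * cexp z) * L) := by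
        ring
    _ = -(cexp (Real.pi * Complex.I * τ))⁻¹ * (cexp (z / 2))⁻¹ * ((1 - cexp (-z)) * P) := by
        rw [hts]
    _ = -((cexp (Real.pi * Complex.I * τ))⁻¹ * ((cexp (z / 2)) ^ 2)⁻¹) *
        ((cexp (z / 2) - (cexp (z / 2))⁻¹) * P) := by
        rw [hmz]
        field_simp

omit hτ in
lemma keyA (z : ℂ) (a : ℤ) :
    wsigma τ (z + 2 * Real.pi * Complex.I * a) = (-1 : ℂ) ^ a * wsigma τ z := by
  induction a using Int.induction_on with
  | zero => simp
  | succ k ih =>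
    push_cast
    push_cast at ih
    rw [show z + 2 * (Real.pi:ℂ) * Complex.I * ((k:ℂ) + 1) =
        (z + 2 * Real.pi * Complex.I * (k:ℂ)) + 2 * Real.pi * Complex.I by ring,
      key1, ih, zpow_add_one₀ (by norm_num : (-1:ℂ) ≠ 0)]
    ring
  | pred k ih =>
    push_cast
    push_cast at ih
    have h := key1 (τ := τ) (((z + 2 * Real.pi * Complex.I * (-(k:ℂ))) - 2 * Real.pi * Complex.I : ℂ))
    rw [show ((z + 2 * Real.pi * Complex.I * (-(k:ℂ))) - 2 * Real.pi * Complex.I) +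
        2 * Real.pi * Complex.I = z + 2 * Real.pi * Complex.I * (-(k:ℂ)) by ring] at h
    rw [show z + 2 * (Real.pi:ℂ) * Complex.I * (-(k:ℂ) - 1) =
        (z + 2 * Real.pi * Complex.I * (-(k:ℂ))) - 2 * Real.pi * Complex.I by ring]
    have h2 : wsigma τ ((z + 2 * Real.pi * Complex.I * (-(k:ℂ))) - 2 * Real.pi * Complex.I) =
        -wsigma τ (z + 2 * Real.pi * Complex.I * (-(k:ℂ))) := by linear_combination h
    rw [h2, ih, zpow_sub_one₀ (by norm_num : (-1:ℂ) ≠ 0)]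
    ring

lemma keyB (z : ℂ) (b : ℤ) :
    wsigma τ (z + 2 * Real.pi * Complex.I * b * τ) =
      (-1 : ℂ) ^ b * cexp (-(Real.pi * Complex.I * τ) * (b:ℂ) ^ 2 - (b:ℂ) * z) * wsigma τ z := by
  induction b using Int.induction_on with
  | zero => simp
  | succ k ih =>
    push_cast
    push_cast at ih
    rw [show z + 2 * (Real.pi:ℂ) * Complex.I * ((k:ℂ) + 1) * τ =
        (z + 2 * Real.pi * Complex.I * (k:ℂ) * τ) + 2 * Real.pi * Complex.I * τ by ring,
      key2 hτ, ih, zpow_add_one₀ (by norm_num : (-1:ℂ) ≠ 0)]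
    have hE : cexp (-(Real.pi * Complex.I * τ) - (z + 2 * Real.pi * Complex.I * (k:ℂ) * τ)) *
        cexp (-(Real.pi * Complex.I * τ) * (k:ℂ) ^ 2 - (k:ℂ) * z) =
        cexp (-(Real.pi * Complex.I * τ) * ((k:ℂ) + 1) ^ 2 - ((k:ℂ) + 1) * z) := by
      rw [← Complex.exp_add]
      congr 1
      ring
    linear_combination (-(-1:ℂ) ^ (k:ℤ) * wsigma τ z) * hE
  | pred k ih =>
    push_cast
    push_cast at ih
    set x : ℂ := z + 2 * Real.pi * Complex.I * (-(k:ℂ) - 1) * τ with hx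
    have hc : cexp (Real.pi * Complex.I * τ + x) * cexp (-(Real.pi * Complex.I * τ) - x) = 1 := by
      rw [← Complex.exp_add, show (Real.pi * Complex.I * τ + x) +
        (-(Real.pi * Complex.I * τ) - x) = 0 by ring, Complex.exp_zero]
    have h2 : wsigma τ x = -cexp (Real.pi * Complex.I * τ + x) * wsigma τ (x + 2 * Real.pi * Complex.I * τ) := by
      rw [key2 hτ x]
      calc wsigma τ x = (cexp (Real.pi * Complex.I * τ + x) *
          cexp (-(Real.pi * Complex.I * τ) - x)) * wsigma τ x := by rw [hc, one_mul]
        _ = _ := by ring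
    rw [show x + 2 * Real.pi * Complex.I * τ =
        z + 2 * Real.pi * Complex.I * (-(k:ℂ)) * τ by rw [hx]; ring] at h2
    rw [h2, ih, zpow_sub_one₀ (by norm_num : (-1:ℂ) ≠ 0)]
    have hE : cexp (Real.pi * Complex.I * τ + x) *
        cexp (-(Real.pi * Complex.I * τ) * (-(k:ℂ)) ^ 2 - (-(k:ℂ)) * z) =
        cexp (-(Real.pi * Complex.I * τ) * (-(k:ℂ) - 1) ^ 2 - (-(k:ℂ) - 1) * z) := by
      rw [← Complex.exp_add]
      congr 1
      rw [hx]
      ring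
    have hinv : ((-1:ℂ))⁻¹ = -1 := by norm_num
    rw [hinv]
    linear_combination (-(-1:ℂ) ^ (-(k:ℤ)) * wsigma τ z) * hE

lemma keyAB (z : ℂ) (a b : ℤ) :
    wsigma τ (z + (2 * Real.pi * Complex.I * a + 2 * Real.pi * Complex.I * b * τ)) =
      (-1 : ℂ) ^ (a + b) * cexp (-(Real.pi * Complex.I * τ) * (b:ℂ) ^ 2 - (b:ℂ) * z) *
        wsigma τ z := by
  rw [show z + (2 * (Real.pi:ℂ) * Complex.I * a + 2 * Real.pi * Complex.I * b * τ) =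
      (z + 2 * Real.pi * Complex.I * a) + 2 * Real.pi * Complex.I * b * τ by ring,
    keyB hτ, keyA]
  have hE : cexp (-(Real.pi * Complex.I * τ) * (b:ℂ) ^ 2 -
      (b:ℂ) * (z + 2 * Real.pi * Complex.I * a)) =
      cexp (-(Real.pi * Complex.I * τ) * (b:ℂ) ^ 2 - (b:ℂ) * z) *
        cexp (((-(a * b) : ℤ) : ℂ) * (2 * Real.pi * Complex.I)) := by
    rw [← Complex.exp_add]
    congr 1
    push_cast
    ring
  rw [hE, Complex.exp_int_mul_two_pi_mul_I, mul_one,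
    zpow_add₀ (by norm_num : (-1:ℂ) ≠ 0)]
  ring

end Tau

lemma zpow_mul0 {u : ℂ} (hu : u ≠ 0) (j k : ℤ) : (u ^ j) ^ k = u ^ (j * k) := by
  obtain ⟨v, rfl⟩ := Ne.isUnit hu
  simp only [← Units.val_zpow_eq_zpow_val]
  rw [← zpow_mul]

lemma zpow_sum0 {u : ℂ} (hu : u ≠ 0) {J : Type*} (s : Finset J) (f : J → ℤ) :
    ∏ j ∈ s, u ^ f j = u ^ (∑ j ∈ s, f j) := by
  induction s using Finset.cons_induction with
  | empty => simp
  | cons j s hj ih =>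
    rw [Finset.prod_cons, Finset.sum_cons, zpow_add₀ hu, ih]

lemma neg_one_parity (a b m : ℤ) : (-1 : ℂ) ^ ((a + b) * m ^ 2) = (-1 : ℂ) ^ (m * a + m * b) := by
  have h1 : (a + b) * m ^ 2 = (m * a + m * b) + (a + b) * (m * (m - 1)) := by ring
  have h2 : Even ((a + b) * (m * (m - 1))) := by
    apply Even.mul_left
    have := Int.even_mul_succ_self (m - 1)
    simpa [mul_comm] using this
  rw [h1, zpow_add₀ (by norm_num : (-1:ℂ) ≠ 0), h2.neg_one_zpow, mul_one]


theorem prod_wsigma_elliptic (τ : ℂ) (hτ : 0 < τ.im)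
    (J : Type*) [Fintype J] (d m : J → ℤ)
    (h : ∑ j : J, d j * (m j) ^ 2 = 0) :
    ∀ (z : ℂ) (a b : ℤ),
      ∏ j : J, wsigma τ ((m j) * (z + (2 * Real.pi * Complex.I * a +
          2 * Real.pi * Complex.I * b * τ))) ^ (d j) =
        ∏ j : J, wsigma τ ((m j) * z) ^ (d j) := by
  intro z a b
  set u : ℂ := (-1 : ℂ) ^ (a + b) *
    cexp (-(Real.pi * Complex.I * τ) * (b:ℂ) ^ 2 - (b:ℂ) * z) with hudef
  have hu : u ≠ 0 :=
    mul_ne_zero (zpow_ne_zero _ (by norm_num)) (Complex.exp_ne_zero _)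
  have hpt : ∀ j : J, wsigma τ ((m j) * (z + (2 * Real.pi * Complex.I * a +
      2 * Real.pi * Complex.I * b * τ))) = u ^ ((m j) ^ 2) * wsigma τ ((m j) * z) := by
    intro j
    have harg : ((m j : ℂ)) * (z + (2 * Real.pi * Complex.I * a +
        2 * Real.pi * Complex.I * b * τ)) =
        ((m j : ℂ) * z) + (2 * Real.pi * Complex.I * ((m j * a : ℤ) : ℂ) +
          2 * Real.pi * Complex.I * ((m j * b : ℤ) : ℂ) * τ) := by
      push_cast
      ring
    rw [harg, keyAB hτ]
    congr 1
    rw [hudef, mul_zpow]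
    congr 1
    · rw [zpow_mul0 (by norm_num : (-1:ℂ) ≠ 0), neg_one_parity a b (m j)]
    · rw [show ((cexp (-(Real.pi * Complex.I * τ) * (b:ℂ) ^ 2 - (b:ℂ) * z)) ^ ((m j) ^ 2 : ℤ)) =
        cexp ((((m j) ^ 2 : ℤ) : ℂ) * (-(Real.pi * Complex.I * τ) * (b:ℂ) ^ 2 - (b:ℂ) * z))
        from (Complex.exp_int_mul _ _).symm]
      congr 1
      push_cast
      ring
  calc ∏ j : J, wsigma τ ((m j) * (z + (2 * Real.pi * Complex.I * a +
          2 * Real.pi * Complex.I * b * τ))) ^ (d j)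
      = ∏ j : J, (u ^ ((m j) ^ 2 * d j) * wsigma τ ((m j) * z) ^ (d j)) := by
        refine Finset.prod_congr rfl fun j _ => ?_
        rw [hpt j, mul_zpow, zpow_mul0 hu]
    _ = (∏ j : J, u ^ ((m j) ^ 2 * d j)) * ∏ j : J, wsigma τ ((m j) * z) ^ (d j) := by
        rw [Finset.prod_mul_distrib]
    _ = ∏ j : J, wsigma τ ((m j) * z) ^ (d j) := by
        rw [zpow_sum0 hu]
        have hs : ∑ j : J, (m j) ^ 2 * d j = 0 := by
          rw [← h]
          exact Finset.sum_congr rfl fun j _ => by ring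
        rw [hs, zpow_zero, one_mul]
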